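/- Let 0 → C'_* → C_* → C''_* → 0 be a short exact sequence of finite-dimensional based chain complexes over a field, with compatible bases, where all three complexes are acyclic. Then Tor(C_*) = Tor(C'_*)·Tor(C''_*) up to sign. -/

import Mathlib

open Finset

variable {F : Type} [Field F]

/-- The chain-complex condition `d ∘ d = 0` for a complex `⋯ → M (i+1) →^{d i} M i → ⋯`. -/
def IsChainComplex {M : ℕ → Type} [∀ i, AddCommGroup (M i)] [∀ i, Module F (M i)]
    (d : ∀ i, M (i + 1) →ₗ[F] M i) : Prop :=
  ∀ i, (d i).comp (d (i + 1)) = 0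

/-- Acyclicity of the chain complex `⋯ → M (i+1) →^{d i} M i → ⋯ → M 0 → 0`:
`H_0 = M 0 / im (d 0) = 0` and `H_{i+1} = ker (d i) / im (d (i+1)) = 0`. -/
def IsAcyclic {M : ℕ → Type} [∀ i, AddCommGroup (M i)] [∀ i, Module F (M i)]
    (d : ∀ i, M (i + 1) →ₗ[F] M i) : Prop :=
  LinearMap.range (d 0) = ⊤ ∧ ∀ i, LinearMap.ker (d i) = LinearMap.range (d (i + 1))

/-- A valid choice of the sets `b^{i+1} ⊂ C_{i+1}` in the definition of Reidemeister
torsion: `b i : Fin (r i) → M (i+1)` is a family of vectors whose boundaries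
`d i (b i x)` form a basis of `im (d i) ⊆ M i`. -/
def IsTorsionChoice {M : ℕ → Type} [∀ i, AddCommGroup (M i)] [∀ i, Module F (M i)]
    {r : ℕ → ℕ} (d : ∀ i, M (i + 1) →ₗ[F] M i) (b : ∀ i, Fin (r i) → M (i + 1)) : Prop :=
  ∀ i, LinearIndependent F (fun x => d i (b i x)) ∧
    Submodule.span F (Set.range fun x => d i (b i x)) = LinearMap.range (d i)

/-- The factor `[d_{i+1}(b^{i+1}) b^i / c^i]`: the determinant, with respect to the given
basis `c i` of `C_i`, of the family consisting of the boundaries `d_i(b^i)` (for `i = 0`)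
resp. `d_{i+1}(b^{i+1})` together with `b^i` (for `i ≥ 1`).  It is set to `0` if the
cardinalities do not match (which never happens for an acyclic complex with a valid
choice). -/
noncomputable def chainDet {M : ℕ → Type} [∀ i, AddCommGroup (M i)] [∀ i, Module F (M i)]
    {k r : ℕ → ℕ} (c : ∀ i, Module.Basis (Fin (k i)) F (M i))
    (d : ∀ i, M (i + 1) →ₗ[F] M i) (b : ∀ i, Fin (r i) → M (i + 1)) : ℕ → F
  | 0 =>
    if h : r 0 = k 0 then (c 0).det fun j => d 0 (b 0 (Fin.cast h.symm j)) else 0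
  | (i + 1) =>
    if h : r (i + 1) + r i = k (i + 1) then
      (c (i + 1)).det fun j =>
        Sum.elim (fun x => d (i + 1) (b (i + 1) x)) (b i)
          (finSumFinEquiv.symm (Fin.cast h.symm j))
    else 0

/-- The Reidemeister torsion `∏_{i=0}^{N} [d_{i+1}(b^{i+1}) b^i / c^i]^{(-1)^{i+1}}` of a
based acyclic chain complex of length `N`. -/
noncomputable def torsion {M : ℕ → Type} [∀ i, AddCommGroup (M i)] [∀ i, Module F (M i)]
    {k r : ℕ → ℕ} (c : ∀ i, Module.Basis (Fin (k i)) F (M i))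
    (d : ∀ i, M (i + 1) →ₗ[F] M i) (b : ∀ i, Fin (r i) → M (i + 1)) (N : ℕ) : F :=
  ∏ i ∈ Finset.range (N + 1), chainDet c d b i ^ ((-1 : ℤ) ^ (i + 1))

open Module

set_option linter.unusedSectionVars false

section Aux

open Submodule Module

variable {M : ℕ → Type} [∀ i, AddCommGroup (M i)] [∀ i, Module F (M i)]
  [∀ i, FiniteDimensional F (M i)] {k r : ℕ → ℕ}

/-- determinant under two different reindexings -/
lemma det_submatrix_two_equiv {n m : Type} [Fintype n] [Fintype m] [DecidableEq n] [DecidableEq m]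
    (A : Matrix m m F) (e f : n ≃ m) :
    ∃ ε : F, (ε = 1 ∨ ε = -1) ∧ (A.submatrix e f).det = ε * A.det := by
  have h : A.submatrix ⇑e ⇑f = (A.submatrix ⇑e ⇑e).submatrix id ⇑(f.trans e.symm) := by
    ext i j; simp
  rw [h, Matrix.det_permute' (f.trans e.symm) (A.submatrix ⇑e ⇑e),
    Matrix.det_submatrix_equiv_self]
  refine ⟨_, ?_, rfl⟩
  rcases Int.units_eq_one_or (Equiv.Perm.sign (f.trans e.symm)) with h | h <;> rw [h] <;> simp

lemma toMatrix_eq_of_expand {ι ι' : Type} [Fintype ι] [DecidableEq ι] [Fintype ι']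
    {V : Type} [AddCommGroup V] [Module F V]
    (e : Basis ι F V) (v : ι' → V) (m : Matrix ι ι' F) (h : ∀ j, v j = ∑ i, m i j • e i) :
    e.toMatrix v = m := by
  ext i j
  rw [Basis.toMatrix_apply, h j, e.repr_sum_self]

variable (d : ∀ i, M (i + 1) →ₗ[F] M i) (b : ∀ i, Fin (r i) → M (i + 1))

noncomputable def rangeBasis (hb : IsTorsionChoice d b) (i : ℕ) :
    Basis (Fin (r i)) F (LinearMap.range (d i)) :=
  (Basis.span (hb i).1).map (LinearEquiv.ofEq _ _ (hb i).2)

lemma rangeBasis_apply (hb : IsTorsionChoice d b) (i : ℕ) (x : Fin (r i)) :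
    (rangeBasis d b hb i x : M i) = d i (b i x) := by
  simp [rangeBasis, Basis.span_apply]

lemma finrank_range_eq (hb : IsTorsionChoice d b) (i : ℕ) :
    finrank F (LinearMap.range (d i)) = r i := by
  rw [finrank_eq_card_basis (rangeBasis d b hb i), Fintype.card_fin]

variable (c : ∀ i, Basis (Fin (k i)) F (M i))

include c in
lemma hk_succ (hac : IsAcyclic d) (hb : IsTorsionChoice d b) (i : ℕ) :
    k (i + 1) = r (i + 1) + r i := by
  have h1 : finrank F (M (i + 1)) = k (i + 1) := by
    rw [finrank_eq_card_basis (c (i + 1)), Fintype.card_fin]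
  have h2 := LinearMap.finrank_range_add_finrank_ker (d i)
  rw [hac.2 i, finrank_range_eq d b hb i, finrank_range_eq d b hb (i + 1)] at h2
  omega

include c in
lemma hk_zero (hac : IsAcyclic d) (hb : IsTorsionChoice d b) :
    k 0 = r 0 := by
  have h1 : finrank F (M 0) = k 0 := by
    rw [finrank_eq_card_basis (c 0), Fintype.card_fin]
  have h2 : finrank F (LinearMap.range (d 0)) = finrank F (M 0) := by
    rw [hac.1]; exact finrank_top F (M 0)
  rw [finrank_range_eq d b hb 0] at h2
  omega

end Aux

section Aux2

open Submodule Module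

variable {M : ℕ → Type} [∀ i, AddCommGroup (M i)] [∀ i, Module F (M i)]
  [∀ i, FiniteDimensional F (M i)] {k r : ℕ → ℕ}
  (d : ∀ i, M (i + 1) →ₗ[F] M i) (b : ∀ i, Fin (r i) → M (i + 1))

lemma dd_zero (hcc : IsChainComplex d) (i : ℕ) (z : M (i + 2)) : d i (d (i + 1) z) = 0 := by
  have := LinearMap.ext_iff.mp (hcc i) z
  simpa using this

lemma li_elim (hcc : IsChainComplex d) (hb : IsTorsionChoice d b) (i : ℕ) :
    LinearIndependent F (Sum.elim (fun x => d (i + 1) (b (i + 1) x)) (b i)) := by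
  rw [Fintype.linearIndependent_iff]
  intro g hg
  rw [Fintype.sum_sum_type] at hg
  simp only [Sum.elim_inl, Sum.elim_inr] at hg
  have h1 : ∑ y, g (Sum.inr y) • d i (b i y) = 0 := by
    have h := congrArg (d i) hg
    simp only [map_add, map_sum, map_smul, dd_zero d hcc i, smul_zero, Finset.sum_const_zero,
      zero_add, map_zero] at h
    exact h
  have h2 : ∀ y, g (Sum.inr y) = 0 :=
    Fintype.linearIndependent_iff.mp (hb i).1 _ h1
  have h3 : ∀ x, g (Sum.inl x) = 0 := by
    apply Fintype.linearIndependent_iff.mp (hb (i + 1)).1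
    have : ∑ x, g (Sum.inl x) • d (i + 1) (b (i + 1) x) = 0 := by
      rw [← hg]; simp [h2]
    exact this
  rintro (x | y)
  · exact h3 x
  · exact h2 y

noncomputable def bigBasis (hcc : IsChainComplex d) (hb : IsTorsionChoice d b) (i : ℕ)
    (hk1 : Module.finrank F (M (i + 1)) = r (i + 1) + r i) :
    Basis (Fin (r (i + 1)) ⊕ Fin (r i)) F (M (i + 1)) :=
  Basis.mk (li_elim d b hcc hb i)
    (((li_elim d b hcc hb i).span_eq_top_of_card_eq_finrank' (by simp [hk1])).ge)

lemma bigBasis_apply (hcc : IsChainComplex d) (hb : IsTorsionChoice d b) (i : ℕ)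
    (hk1 : Module.finrank F (M (i + 1)) = r (i + 1) + r i) (p : Fin (r (i + 1)) ⊕ Fin (r i)) :
    bigBasis d b hcc hb i hk1 p = Sum.elim (fun x => d (i + 1) (b (i + 1) x)) (b i) p := by
  simp [bigBasis]

lemma li_zero (hb : IsTorsionChoice d b) : LinearIndependent F (fun x => d 0 (b 0 x)) := (hb 0).1

noncomputable def zeroBasis (hac : IsAcyclic d) (hb : IsTorsionChoice d b) :
    Basis (Fin (r 0)) F (M 0) :=
  Basis.mk (hb 0).1 (by rw [(hb 0).2, hac.1])

lemma zeroBasis_apply (hac : IsAcyclic d) (hb : IsTorsionChoice d b) (x : Fin (r 0)) :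
    zeroBasis d b hac hb x = d 0 (b 0 x) := by
  simp [zeroBasis]

lemma finrank_M (c : ∀ i, Basis (Fin (k i)) F (M i)) (i : ℕ) :
    Module.finrank F (M i) = k i := by
  rw [Module.finrank_eq_card_basis (c i), Fintype.card_fin]

/-- the chainDet at a successor index, as determinant of a reindexed big basis -/
lemma chainDet_succ_eq (hcc : IsChainComplex d) (hb : IsTorsionChoice d b)
    (c : ∀ i, Basis (Fin (k i)) F (M i)) (i : ℕ)
    (h : r (i + 1) + r i = k (i + 1))
    (hk1 : Module.finrank F (M (i + 1)) = r (i + 1) + r i) :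
    chainDet c d b (i + 1) =
      ((c (i + 1)).toMatrix
        ⇑((bigBasis d b hcc hb i hk1).reindex
          (finSumFinEquiv.trans (finCongr h)))).det := by
  rw [chainDet, dif_pos h, Basis.det_apply]
  congr 1
  apply congrArg
  funext j
  rw [Basis.coe_reindex]
  simp only [Function.comp_apply, Equiv.symm_trans_apply, bigBasis_apply]
  congr 1

lemma chainDet_zero_eq (hac : IsAcyclic d) (hb : IsTorsionChoice d b)
    (c : ∀ i, Basis (Fin (k i)) F (M i)) (h : r 0 = k 0) :
    chainDet c d b 0 =
      ((c 0).toMatrix ⇑((zeroBasis d b hac hb).reindex (finCongr h))).det := by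
  rw [chainDet, dif_pos h, Basis.det_apply]
  congr 1
  apply congrArg
  funext j
  rw [Basis.coe_reindex]
  simp only [Function.comp_apply, zeroBasis_apply]
  congr 1

end Aux2

section Aux3

open Submodule Module

variable {M : ℕ → Type} [∀ i, AddCommGroup (M i)] [∀ i, Module F (M i)]
  [∀ i, FiniteDimensional F (M i)] {k r : ℕ → ℕ}
  (d : ∀ i, M (i + 1) →ₗ[F] M i) (b b2 : ∀ i, Fin (r i) → M (i + 1))

/-- change-of-choice matrix on the image of `d i` -/
noncomputable def crossMat (hb : IsTorsionChoice d b) (hb2 : IsTorsionChoice d b2) (i : ℕ) :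
    Matrix (Fin (r i)) (Fin (r i)) F :=
  (rangeBasis d b hb i).toMatrix ⇑(rangeBasis d b2 hb2 i)

lemma crossMat_isUnit (hb : IsTorsionChoice d b) (hb2 : IsTorsionChoice d b2) (i : ℕ) :
    IsUnit (crossMat d b b2 hb hb2 i).det := by
  rw [crossMat, ← Basis.det_apply]
  exact Basis.isUnit_det _ _

lemma crossMat_expand (hb : IsTorsionChoice d b) (hb2 : IsTorsionChoice d b2) (i : ℕ)
    (x : Fin (r i)) :
    d i (b2 i x) = ∑ z, crossMat d b b2 hb hb2 i z x • d i (b i z) := by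
  have h := Basis.sum_toMatrix_smul_self (rangeBasis d b hb i) ⇑(rangeBasis d b2 hb2 i) x
  have h2 := congrArg (Submodule.subtype (LinearMap.range (d i))) h
  simp only [map_sum, map_smul, Submodule.coe_subtype, rangeBasis_apply] at h2
  exact h2.symm

lemma exists_blocks (hcc : IsChainComplex d) (hac : IsAcyclic d)
    (hb : IsTorsionChoice d b) (hb2 : IsTorsionChoice d b2) (i : ℕ)
    (hk1 : Module.finrank F (M (i + 1)) = r (i + 1) + r i) :
    ∃ C, (bigBasis d b hcc hb i hk1).toMatrix ⇑(bigBasis d b2 hcc hb2 i hk1) =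
      Matrix.fromBlocks (crossMat d b b2 hb hb2 (i + 1)) C 0 (crossMat d b b2 hb hb2 i) := by
  set E := bigBasis d b hcc hb i hk1 with hE
  set E2 := bigBasis d b2 hcc hb2 i hk1 with hE2
  -- the correction vectors
  have hmem : ∀ y : Fin (r i),
      b2 i y - ∑ z, crossMat d b b2 hb hb2 i z y • b i z ∈ LinearMap.range (d (i + 1)) := by
    intro y
    rw [← hac.2 i, LinearMap.mem_ker, map_sub, map_sum]
    simp only [map_smul]
    rw [crossMat_expand d b b2 hb hb2 i y, sub_self]
  refine ⟨Matrix.of fun p y => (rangeBasis d b hb (i + 1)).repr ⟨_, hmem y⟩ p, ?_⟩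
  apply toMatrix_eq_of_expand
  rintro (x | y)
  · -- column `inl x` : d (i+1) (b2 (i+1) x)
    rw [Fintype.sum_sum_type]
    simp only [Matrix.fromBlocks_apply₁₁, Matrix.fromBlocks_apply₂₁, Matrix.zero_apply,
      zero_smul, Finset.sum_const_zero, add_zero, hE, hE2, bigBasis_apply, Sum.elim_inl]
    exact crossMat_expand d b b2 hb hb2 (i + 1) x
  · -- column `inr y` : b2 i y
    rw [Fintype.sum_sum_type]
    simp only [Matrix.fromBlocks_apply₁₂, Matrix.of_apply, Matrix.fromBlocks_apply₂₂, hE,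
      bigBasis_apply, Sum.elim_inl, Sum.elim_inr]
    have h := Basis.sum_repr (rangeBasis d b hb (i + 1)) ⟨_, hmem y⟩
    have h2 := congrArg (Submodule.subtype (LinearMap.range (d (i + 1)))) h
    simp only [map_sum, map_smul, Submodule.coe_subtype, rangeBasis_apply] at h2
    rw [hE2, bigBasis_apply]
    simp only [Sum.elim_inr]
    rw [h2, sub_add_cancel]

end Aux3

section Aux4

open Module

variable {M : ℕ → Type} [∀ i, AddCommGroup (M i)] [∀ i, Module F (M i)]
  [∀ i, FiniteDimensional F (M i)] {k r : ℕ → ℕ}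
  (d : ∀ i, M (i + 1) →ₗ[F] M i) (b b2 : ∀ i, Fin (r i) → M (i + 1))

lemma toMatrix_reindex_reindex {ι ι2 : Type} [Fintype ι] [DecidableEq ι] [Fintype ι2]
    [DecidableEq ι2] {V : Type} [AddCommGroup V] [Module F V]
    (B : Basis ι F V) (w : ι2 → V) (e : ι ≃ ι2) :
    (B.reindex e).toMatrix w = (B.toMatrix (w ∘ ⇑e)).submatrix ⇑e.symm ⇑e.symm := by
  ext j j'
  simp [Basis.toMatrix_apply, Basis.repr_reindex_apply]

lemma chainDet_succ_ratio (hcc : IsChainComplex d) (hac : IsAcyclic d)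
    (hb : IsTorsionChoice d b) (hb2 : IsTorsionChoice d b2)
    (c : ∀ i, Basis (Fin (k i)) F (M i)) (i : ℕ) :
    chainDet c d b2 (i + 1) =
      (crossMat d b b2 hb hb2 (i + 1)).det * (crossMat d b b2 hb hb2 i).det *
        chainDet c d b (i + 1) := by
  have h : r (i + 1) + r i = k (i + 1) := (hk_succ d b c hac hb i).symm
  have hk1 : Module.finrank F (M (i + 1)) = r (i + 1) + r i := by rw [finrank_M c]; omega
  rw [chainDet_succ_eq d b2 hcc hb2 c i h hk1, chainDet_succ_eq d b hcc hb c i h hk1]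
  set e := finSumFinEquiv.trans (finCongr h) with he
  set E := bigBasis d b hcc hb i hk1 with hE
  set E2 := bigBasis d b2 hcc hb2 i hk1 with hE2
  have hmm : (c (i + 1)).toMatrix ⇑(E2.reindex e) =
      (c (i + 1)).toMatrix ⇑(E.reindex e) * (E.reindex e).toMatrix ⇑(E2.reindex e) :=
    (Basis.toMatrix_mul_toMatrix _ _ _).symm
  rw [hmm, Matrix.det_mul]
  have harg : ⇑(E2.reindex e) ∘ ⇑e = ⇑E2 := by funext p; simp
  have h2 : (E.reindex e).toMatrix ⇑(E2.reindex e) = (E.toMatrix ⇑E2).submatrix ⇑e.symm ⇑e.symm := by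
    rw [toMatrix_reindex_reindex, harg]
  rw [h2, Matrix.det_submatrix_equiv_self]
  obtain ⟨C, hC⟩ := exists_blocks d b b2 hcc hac hb hb2 i hk1
  rw [← hE, ← hE2] at hC
  rw [hC, Matrix.det_fromBlocks_zero₂₁]
  ring

lemma chainDet_zero_ratio (hac : IsAcyclic d)
    (hb : IsTorsionChoice d b) (hb2 : IsTorsionChoice d b2)
    (c : ∀ i, Basis (Fin (k i)) F (M i)) :
    chainDet c d b2 0 = (crossMat d b b2 hb hb2 0).det * chainDet c d b 0 := by
  have h : r 0 = k 0 := (hk_zero d b c hac hb).symm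
  rw [chainDet_zero_eq d b2 hac hb2 c h, chainDet_zero_eq d b hac hb c h]
  set e := finCongr h with he
  set Z := zeroBasis d b hac hb with hZ
  set Z2 := zeroBasis d b2 hac hb2 with hZ2
  have hmm : (c 0).toMatrix ⇑(Z2.reindex e) =
      (c 0).toMatrix ⇑(Z.reindex e) * (Z.reindex e).toMatrix ⇑(Z2.reindex e) :=
    (Basis.toMatrix_mul_toMatrix _ _ _).symm
  rw [hmm, Matrix.det_mul]
  have harg : ⇑(Z2.reindex e) ∘ ⇑e = ⇑Z2 := by funext p; simp
  have h2 : (Z.reindex e).toMatrix ⇑(Z2.reindex e) = (Z.toMatrix ⇑Z2).submatrix ⇑e.symm ⇑e.symm := by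
    rw [toMatrix_reindex_reindex, harg]
  rw [h2, Matrix.det_submatrix_equiv_self]
  have h3 : Z.toMatrix ⇑Z2 = crossMat d b b2 hb hb2 0 := by
    apply toMatrix_eq_of_expand
    intro j
    rw [hZ2, zeroBasis_apply]
    rw [crossMat_expand d b b2 hb hb2 0 j]
    congr 1
    funext z
    rw [hZ, zeroBasis_apply]
  rw [h3]
  ring

lemma torsion_ratio (hcc : IsChainComplex d) (hac : IsAcyclic d)
    (hb : IsTorsionChoice d b) (hb2 : IsTorsionChoice d b2)
    (c : ∀ i, Basis (Fin (k i)) F (M i)) (N : ℕ) :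
    torsion c d b2 N =
      (crossMat d b b2 hb hb2 N).det ^ ((-1 : ℤ) ^ (N + 1)) * torsion c d b N := by
  induction N with
  | zero =>
    have e0 : ∀ b3 : ∀ i, Fin (r i) → M (i + 1), torsion c d b3 0 =
        chainDet c d b3 0 ^ ((-1 : ℤ) ^ (0 + 1)) := by
      intro b3
      exact Finset.prod_range_one (f := fun i => chainDet c d b3 i ^ ((-1 : ℤ) ^ (i + 1)))
    rw [e0 b, e0 b2, chainDet_zero_ratio d b b2 hac hb hb2 c, mul_zpow]
  | succ n ih =>
    have hne : (crossMat d b b2 hb hb2 n).det ≠ 0 := (crossMat_isUnit d b b2 hb hb2 n).ne_zero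
    have e1 : torsion c d b2 (n + 1) = torsion c d b2 n *
        chainDet c d b2 (n + 1) ^ ((-1 : ℤ) ^ (n + 1 + 1)) :=
      Finset.prod_range_succ (fun i => chainDet c d b2 i ^ ((-1 : ℤ) ^ (i + 1))) (n + 1)
    have e2 : torsion c d b (n + 1) = torsion c d b n *
        chainDet c d b (n + 1) ^ ((-1 : ℤ) ^ (n + 1 + 1)) :=
      Finset.prod_range_succ (fun i => chainDet c d b i ^ ((-1 : ℤ) ^ (i + 1))) (n + 1)
    rw [e1, e2, ih, chainDet_succ_ratio d b b2 hcc hac hb hb2 c n]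
    rw [mul_zpow, mul_zpow]
    have hcancel : (crossMat d b b2 hb hb2 n).det ^ ((-1 : ℤ) ^ (n + 1)) *
        (crossMat d b b2 hb hb2 n).det ^ ((-1 : ℤ) ^ (n + 1 + 1)) = 1 := by
      rw [← zpow_add₀ hne]
      norm_num [pow_succ]
    calc (crossMat d b b2 hb hb2 n).det ^ ((-1 : ℤ) ^ (n + 1)) * torsion c d b n *
          ((crossMat d b b2 hb hb2 (n + 1)).det ^ ((-1 : ℤ) ^ (n + 1 + 1)) *
            (crossMat d b b2 hb hb2 n).det ^ ((-1 : ℤ) ^ (n + 1 + 1)) *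
            chainDet c d b (n + 1) ^ ((-1 : ℤ) ^ (n + 1 + 1)))
        = ((crossMat d b b2 hb hb2 n).det ^ ((-1 : ℤ) ^ (n + 1)) *
            (crossMat d b b2 hb hb2 n).det ^ ((-1 : ℤ) ^ (n + 1 + 1))) *
          ((crossMat d b b2 hb hb2 (n + 1)).det ^ ((-1 : ℤ) ^ (n + 1 + 1)) *
            (torsion c d b n * chainDet c d b (n + 1) ^ ((-1 : ℤ) ^ (n + 1 + 1)))) := by ring
      _ = _ := by rw [hcancel, one_mul]

lemma torsion_eq_of_choices (hcc : IsChainComplex d) (hac : IsAcyclic d)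
    (hb : IsTorsionChoice d b) (hb2 : IsTorsionChoice d b2)
    (c : ∀ i, Basis (Fin (k i)) F (M i)) (N : ℕ) (hN : r N = 0) :
    torsion c d b2 N = torsion c d b N := by
  rw [torsion_ratio d b b2 hcc hac hb hb2 c N]
  haveI : IsEmpty (Fin (r N)) := by rw [hN]; infer_instance
  rw [Matrix.det_isEmpty, one_zpow, one_mul]

end Aux4

section SES

variable {V' V V'' : Type} [AddCommGroup V'] [AddCommGroup V] [AddCommGroup V'']
  [Module F V'] [Module F V] [Module F V'']
  (f : V' →ₗ[F] V) (g : V →ₗ[F] V'') (s : V'' →ₗ[F] V)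

lemma gs_eq (hs : g.comp s = LinearMap.id) (x : V'') : g (s x) = x := by
  have := LinearMap.ext_iff.mp hs x
  simpa using this

lemma gf_eq (hex : LinearMap.range f = LinearMap.ker g) (x : V') : g (f x) = 0 := by
  have : f x ∈ LinearMap.ker g := hex ▸ LinearMap.mem_range_self f x
  exact this

noncomputable def sesEquiv (hinj : Function.Injective f)
    (hex : LinearMap.range f = LinearMap.ker g) (hs : g.comp s = LinearMap.id) :
    (V' × V'') ≃ₗ[F] V := by
  apply LinearEquiv.ofBijective (f.coprod s)
  constructor
  · intro p q hpq
    simp only [LinearMap.coprod_apply] at hpq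
    have h1 : g (f p.1 + s p.2) = g (f q.1 + s q.2) := by rw [hpq]
    simp only [map_add, gs_eq g s hs, gf_eq f g hex, zero_add] at h1
    have h2 : f p.1 = f q.1 := by
      have := congrArg (fun z => z - s p.2) hpq
      simpa [h1] using this
    exact Prod.ext (hinj h2) h1
  · intro v
    have hv : v - s (g v) ∈ LinearMap.range f := by
      rw [hex, LinearMap.mem_ker, map_sub, gs_eq g s hs, sub_self]
    obtain ⟨p, hp⟩ := hv
    exact ⟨(p, g v), by simp [hp]⟩

lemma sesEquiv_apply (hinj : Function.Injective f)
    (hex : LinearMap.range f = LinearMap.ker g) (hs : g.comp s = LinearMap.id)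
    (p : V') (q : V'') : sesEquiv f g s hinj hex hs (p, q) = f p + s q := rfl

lemma sesEquiv_symm_apply (hinj : Function.Injective f)
    (hex : LinearMap.range f = LinearMap.ker g) (hs : g.comp s = LinearMap.id)
    (p : V') (q : V'') : (sesEquiv f g s hinj hex hs).symm (f p + s q) = (p, q) := by
  rw [← sesEquiv_apply f g s hinj hex hs, LinearEquiv.symm_apply_apply]

variable {k' k'' : ℕ}

/-- the combined basis of the middle term -/
noncomputable def midBasis (c' : Basis (Fin k') F V') (c'' : Basis (Fin k'') F V'')
    (hinj : Function.Injective f) (hex : LinearMap.range f = LinearMap.ker g)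
    (hs : g.comp s = LinearMap.id) : Basis (Fin k' ⊕ Fin k'') F V :=
  (c'.prod c'').map (sesEquiv f g s hinj hex hs)

lemma midBasis_repr_inl (c' : Basis (Fin k') F V') (c'' : Basis (Fin k'') F V'')
    (hinj : Function.Injective f) (hex : LinearMap.range f = LinearMap.ker g)
    (hs : g.comp s = LinearMap.id) (p : V') (q : V'') (x : Fin k') :
    (midBasis f g s c' c'' hinj hex hs).repr (f p + s q) (Sum.inl x) = c'.repr p x := by
  rw [midBasis, Basis.map_repr]
  simp only [LinearEquiv.trans_apply, sesEquiv_symm_apply f g s hinj hex hs]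
  exact Basis.prod_repr_inl _ _ _ _

lemma midBasis_repr_inr (c' : Basis (Fin k') F V') (c'' : Basis (Fin k'') F V'')
    (hinj : Function.Injective f) (hex : LinearMap.range f = LinearMap.ker g)
    (hs : g.comp s = LinearMap.id) (p : V') (q : V'') (y : Fin k'') :
    (midBasis f g s c' c'' hinj hex hs).repr (f p + s q) (Sum.inr y) = c''.repr q y := by
  rw [midBasis, Basis.map_repr]
  simp only [LinearEquiv.trans_apply, sesEquiv_symm_apply f g s hinj hex hs]
  exact Basis.prod_repr_inr _ _ _ _

lemma midBasis_apply_inl (c' : Basis (Fin k') F V') (c'' : Basis (Fin k'') F V'')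
    (hinj : Function.Injective f) (hex : LinearMap.range f = LinearMap.ker g)
    (hs : g.comp s = LinearMap.id) (x : Fin k') :
    midBasis f g s c' c'' hinj hex hs (Sum.inl x) = f (c' x) := by
  rw [midBasis, Basis.map_apply, Basis.prod_apply]
  simp [sesEquiv_apply]

lemma midBasis_apply_inr (c' : Basis (Fin k') F V') (c'' : Basis (Fin k'') F V'')
    (hinj : Function.Injective f) (hex : LinearMap.range f = LinearMap.ker g)
    (hs : g.comp s = LinearMap.id) (y : Fin k'') :
    midBasis f g s c' c'' hinj hex hs (Sum.inr y) = s (c'' y) := by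
  rw [midBasis, Basis.map_apply, Basis.prod_apply]
  simp [sesEquiv_apply]

end SES

section Mult

open Module

variable {M' M M'' : ℕ → Type}
    [∀ i, AddCommGroup (M' i)] [∀ i, Module F (M' i)] [∀ i, FiniteDimensional F (M' i)]
    [∀ i, AddCommGroup (M i)] [∀ i, Module F (M i)] [∀ i, FiniteDimensional F (M i)]
    [∀ i, AddCommGroup (M'' i)] [∀ i, Module F (M'' i)] [∀ i, FiniteDimensional F (M'' i)]
    {k' k k'' r' r r'' : ℕ → ℕ}
    (d' : ∀ i, M' (i + 1) →ₗ[F] M' i) (d : ∀ i, M (i + 1) →ₗ[F] M i)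
    (d'' : ∀ i, M'' (i + 1) →ₗ[F] M'' i)
    (f : ∀ i, M' i →ₗ[F] M i) (g : ∀ i, M i →ₗ[F] M'' i) (s : ∀ i, M'' i →ₗ[F] M i)
    (b' : ∀ i, Fin (r' i) → M' (i + 1)) (b'' : ∀ i, Fin (r'' i) → M'' (i + 1))

/-- the combined torsion choice in the middle complex -/
noncomputable def bhat (i : ℕ) : Fin (r' i + r'' i) → M (i + 1) := fun x =>
  Sum.elim (fun a => f (i + 1) (b' i a)) (fun a => s (i + 1) (b'' i a)) (finSumFinEquiv.symm x)

lemma fd_eq (hf : ∀ i, (f i).comp (d' i) = (d i).comp (f (i + 1))) (i : ℕ) (y : M' (i + 1)) :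
    f i (d' i y) = d i (f (i + 1) y) := by
  have := LinearMap.ext_iff.mp (hf i) y
  simpa using this

lemma gd_eq (hg : ∀ i, (g i).comp (d i) = (d'' i).comp (g (i + 1))) (i : ℕ) (y : M (i + 1)) :
    g i (d i y) = d'' i (g (i + 1) y) := by
  have := LinearMap.ext_iff.mp (hg i) y
  simpa using this

lemma d_bhat (hf : ∀ i, (f i).comp (d' i) = (d i).comp (f (i + 1))) (i : ℕ)
    (x : Fin (r' i + r'' i)) :
    d i (bhat f s b' b'' i x) =
      Sum.elim (fun a => f i (d' i (b' i a))) (fun a => d i (s (i + 1) (b'' i a)))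
        (finSumFinEquiv.symm x) := by
  rw [bhat]
  rcases finSumFinEquiv.symm x with a | a
  · simp [fd_eq d' d f hf i]
  · simp

lemma herr (hg : ∀ i, (g i).comp (d i) = (d'' i).comp (g (i + 1)))
    (hex : ∀ i, LinearMap.range (f i) = LinearMap.ker (g i))
    (hs : ∀ i, (g i).comp (s i) = LinearMap.id) (i : ℕ) (x : M'' (i + 1)) :
    ∃ w', d i (s (i + 1) x) = f i w' + s i (d'' i x) := by
  have hmem : d i (s (i + 1) x) - s i (d'' i x) ∈
      LinearMap.range (f i) := by
    rw [hex i, LinearMap.mem_ker, map_sub, gd_eq d d'' g hg i,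
      gs_eq (g (i + 1)) (s (i + 1)) (hs (i + 1)), gs_eq (g i) (s i) (hs i),
      sub_self]
  obtain ⟨w', hw'⟩ := hmem
  exact ⟨w', by rw [hw']; abel⟩

lemma f_preimage_range (hcc : IsChainComplex d)
    (hf : ∀ i, (f i).comp (d' i) = (d i).comp (f (i + 1)))
    (hg : ∀ i, (g i).comp (d i) = (d'' i).comp (g (i + 1)))
    (hinj : ∀ i, Function.Injective (f i))
    (hex : ∀ i, LinearMap.range (f i) = LinearMap.ker (g i))
    (hsurj : ∀ i, Function.Surjective (g i))
    (hac'' : IsAcyclic d'') (i : ℕ) (p : M' i) (hp : f i p ∈ LinearMap.range (d i)) :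
    p ∈ LinearMap.range (d' i) := by
  obtain ⟨w, hw⟩ := hp
  have h1 : g (i + 1) w ∈ LinearMap.ker (d'' i) := by
    rw [LinearMap.mem_ker, ← gd_eq d d'' g hg i, hw, gf_eq (f i) (g i) (hex i)]
  rw [hac''.2 i] at h1
  obtain ⟨z'', hz''⟩ := h1
  obtain ⟨z, hz⟩ := hsurj (i + 2) z''
  have h2 : w - d (i + 1) z ∈ LinearMap.range (f (i + 1)) := by
    rw [hex (i + 1), LinearMap.mem_ker, map_sub, gd_eq d d'' g hg (i + 1), hz, hz'', sub_self]
  obtain ⟨q, hq⟩ := h2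
  refine ⟨q, hinj i ?_⟩
  rw [fd_eq d' d f hf i, hq, map_sub, dd_zero d hcc i, sub_zero, hw]

lemma bhat_torsionChoice (hcc : IsChainComplex d)
    (hf : ∀ i, (f i).comp (d' i) = (d i).comp (f (i + 1)))
    (hg : ∀ i, (g i).comp (d i) = (d'' i).comp (g (i + 1)))
    (hinj : ∀ i, Function.Injective (f i))
    (hex : ∀ i, LinearMap.range (f i) = LinearMap.ker (g i))
    (hsurj : ∀ i, Function.Surjective (g i))
    (hs : ∀ i, (g i).comp (s i) = LinearMap.id)
    (hac'' : IsAcyclic d'')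
    (hb' : IsTorsionChoice d' b') (hb'' : IsTorsionChoice d'' b'') :
    IsTorsionChoice d (bhat f s b' b'') := by
  intro i
  constructor
  · -- linear independence
    rw [Fintype.linearIndependent_iff]
    intro t ht
    have ht2 : ∑ x, t x • (Sum.elim (fun a => f i (d' i (b' i a)))
        (fun a => d i (s (i + 1) (b'' i a))) (finSumFinEquiv.symm x)) = 0 := by
      rw [← ht]
      congr 1
      funext x
      rw [d_bhat d' d f s b' b'' hf i x]
    rw [← Equiv.sum_comp finSumFinEquiv
      (fun x => t x • (Sum.elim (fun a => f i (d' i (b' i a)))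
        (fun a => d i (s (i + 1) (b'' i a))) (finSumFinEquiv.symm x)))] at ht2
    simp only [Equiv.symm_apply_apply] at ht2
    rw [Fintype.sum_sum_type] at ht2
    simp only [Sum.elim_inl, Sum.elim_inr] at ht2
    -- apply g i
    have hg2 : ∑ a, t (finSumFinEquiv (Sum.inr a)) • d'' i (g (i + 1) (s (i + 1) (b'' i a))) = 0 := by
      have h := congrArg (g i) ht2
      simp only [map_add, map_sum, map_smul, gf_eq (f i) (g i) (hex i), smul_zero,
        Finset.sum_const_zero, zero_add, map_zero, gd_eq d d'' g hg i] at h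
      exact h
    simp only [gs_eq (g (i + 1)) (s (i + 1)) (hs (i + 1))] at hg2
    have hz'' : ∀ a, t (finSumFinEquiv (Sum.inr a)) = 0 :=
      Fintype.linearIndependent_iff.mp (hb'' i).1 _ hg2
    have hz''2 : ∀ a, t (Fin.natAdd (r' i) a) = 0 := by
      intro a; have := hz'' a; simpa using this
    have hf2 : ∑ a, t (finSumFinEquiv (Sum.inl a)) • f i (d' i (b' i a)) = 0 := by
      rw [← ht2]
      simp [hz'', hz''2]
    have hf3 : f i (∑ a, t (finSumFinEquiv (Sum.inl a)) • d' i (b' i a)) = 0 := by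
      rw [map_sum]; simpa using hf2
    have hz' : ∀ a, t (finSumFinEquiv (Sum.inl a)) = 0 := by
      apply Fintype.linearIndependent_iff.mp (hb' i).1
      apply hinj i
      rw [hf3, map_zero]
    intro x
    have := Equiv.apply_symm_apply finSumFinEquiv x
    rcases hp : finSumFinEquiv.symm x with a | a
    · rw [← this, hp]; exact hz' a
    · rw [← this, hp]; exact hz'' a
  · -- span equals the range of `d i`
    apply le_antisymm
    · rw [Submodule.span_le]
      rintro v ⟨x, rfl⟩
      exact LinearMap.mem_range_self _ _
    · rintro v ⟨w, rfl⟩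
      have hgen1 : ∀ a : Fin (r' i), f i (d' i (b' i a)) ∈
          Submodule.span F (Set.range fun x => d i (bhat f s b' b'' i x)) := by
        intro a
        apply Submodule.subset_span
        refine ⟨finSumFinEquiv (Sum.inl a), ?_⟩
        simp [d_bhat d' d f s b' b'' hf i]
      have hgen2 : ∀ a : Fin (r'' i), d i (s (i + 1) (b'' i a)) ∈
          Submodule.span F (Set.range fun x => d i (bhat f s b' b'' i x)) := by
        intro a
        apply Submodule.subset_span
        refine ⟨finSumFinEquiv (Sum.inr a), ?_⟩
        simp [d_bhat d' d f s b' b'' hf i]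
      have h1 : g i (d i w) ∈ Submodule.span F (Set.range fun y => d'' i (b'' i y)) := by
        rw [(hb'' i).2, gd_eq d d'' g hg i]
        exact LinearMap.mem_range_self _ _
      obtain ⟨t, ht⟩ := Submodule.mem_span_range_iff_exists_fun F |>.mp h1
      set w2 := d i w - ∑ y, t y • d i (s (i + 1) (b'' i y)) with hw2
      have hw2g : w2 ∈ LinearMap.range (f i) := by
        rw [hex i, LinearMap.mem_ker, hw2, map_sub, map_sum]
        simp only [map_smul, gd_eq d d'' g hg i,
          gs_eq (g (i + 1)) (s (i + 1)) (hs (i + 1))]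
        rw [sub_eq_zero, ← gd_eq d d'' g hg i]
        exact ht.symm
      obtain ⟨p, hp⟩ := hw2g
      have hw2r : w2 ∈ LinearMap.range (d i) := by
        apply Submodule.sub_mem
        · exact LinearMap.mem_range_self _ _
        · apply Submodule.sum_mem
          intro y _
          exact Submodule.smul_mem _ _ (LinearMap.mem_range_self _ _)
      have hpr : p ∈ LinearMap.range (d' i) :=
        f_preimage_range d' d d'' f g hcc hf hg hinj hex hsurj hac'' i p (hp ▸ hw2r)
      obtain ⟨q, hq⟩ := hpr
      have h2 : d' i q ∈ Submodule.span F (Set.range fun a => d' i (b' i a)) := by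
        rw [(hb' i).2]; exact LinearMap.mem_range_self _ _
      obtain ⟨t', ht'⟩ := Submodule.mem_span_range_iff_exists_fun F |>.mp h2
      have hw2span : w2 ∈ Submodule.span F (Set.range fun x => d i (bhat f s b' b'' i x)) := by
        rw [← hp, ← hq, ← ht', map_sum]
        apply Submodule.sum_mem
        intro a _
        rw [map_smul]
        exact Submodule.smul_mem _ _ (hgen1 a)
      have : d i w = w2 + ∑ y, t y • d i (s (i + 1) (b'' i y)) := by rw [hw2]; abel
      rw [this]
      apply Submodule.add_mem _ hw2span
      apply Submodule.sum_mem
      intro y _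
      exact Submodule.smul_mem _ _ (hgen2 y)

lemma rank_add (c' : ∀ i, Basis (Fin (k' i)) F (M' i)) (c : ∀ i, Basis (Fin (k i)) F (M i))
    (c'' : ∀ i, Basis (Fin (k'' i)) F (M'' i))
    (hac' : IsAcyclic d') (hac : IsAcyclic d) (hac'' : IsAcyclic d'')
    (b : ∀ i, Fin (r i) → M (i + 1))
    (hb' : IsTorsionChoice d' b') (hb : IsTorsionChoice d b) (hb'' : IsTorsionChoice d'' b'')
    (N : ℕ) (hdim : ∀ i, N < i → k i = 0) (hsum : ∀ i, k' i + k'' i = k i) :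
    ∀ i, r' i + r'' i = r i := by
  have hbase : ∀ i, N ≤ i → r' i + r'' i = r i := by
    intro i hi
    have h1 := hk_succ d b c hac hb i
    have h2 := hk_succ d' b' c' hac' hb' i
    have h3 := hk_succ d'' b'' c'' hac'' hb'' i
    have h4 := hdim (i + 1) (by omega)
    have h5 := hsum (i + 1)
    omega
  have key : ∀ m i, N ≤ i + m → r' i + r'' i = r i := by
    intro m
    induction m with
    | zero => intro i hi; exact hbase i (by omega)
    | succ m ih =>
      intro i hi
      by_cases hN : N ≤ i
      · exact hbase i hN
      · have hrec := ih (i + 1) (by omega)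
        have h1 := hk_succ d b c hac hb i
        have h2 := hk_succ d' b' c' hac' hb' i
        have h3 := hk_succ d'' b'' c'' hac'' hb'' i
        have h5 := hsum (i + 1)
        omega
  intro i
  exact key N i (by omega)

end Mult

section Recast

open Module

variable {M : ℕ → Type} [∀ i, AddCommGroup (M i)] [∀ i, Module F (M i)]
  [∀ i, FiniteDimensional F (M i)] {k r r2 : ℕ → ℕ}
  (d : ∀ i, M (i + 1) →ₗ[F] M i) (b2 : ∀ i, Fin (r2 i) → M (i + 1))
  (hr : ∀ i, r2 i = r i)

lemma torsionChoice_recast (hb2 : IsTorsionChoice d b2) :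
    IsTorsionChoice d (fun i (x : Fin (r i)) => b2 i (Fin.cast (hr i).symm x)) := by
  intro i
  constructor
  · exact (hb2 i).1.comp (Fin.cast (hr i).symm) (Fin.cast_injective _)
  · have hsr : Set.range (fun (x : Fin (r i)) => d i (b2 i (Fin.cast (hr i).symm x))) =
        Set.range (fun y => d i (b2 i y)) := by
      have hsurj : Function.Surjective (Fin.cast (hr i).symm) := (finCongr (hr i).symm).surjective
      exact Function.Surjective.range_comp hsurj (fun y => d i (b2 i y))
    rw [hsr]
    exact (hb2 i).2

lemma elim_cast_eq {X : Type} {a a2 bn bn2 : ℕ} (ha : a2 = a) (hb : bn2 = bn)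
    (u : Fin a2 → X) (v : Fin bn2 → X) (h : a + bn = a2 + bn2) (j : Fin (a + bn)) :
    Sum.elim (fun x : Fin a => u (Fin.cast ha.symm x)) (fun y : Fin bn => v (Fin.cast hb.symm y))
      (finSumFinEquiv.symm j) = Sum.elim u v (finSumFinEquiv.symm (Fin.cast h j)) := by
  subst ha
  subst hb
  rfl

lemma chainDet_recast (c : ∀ i, Basis (Fin (k i)) F (M i)) (i : ℕ) :
    chainDet c d (fun i (x : Fin (r i)) => b2 i (Fin.cast (hr i).symm x)) i =
      chainDet c d b2 i := by
  match i with
  | 0 =>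
    rw [chainDet, chainDet]
    by_cases h : r2 0 = k 0
    · rw [dif_pos h, dif_pos (by have := hr 0; omega : r 0 = k 0)]
      apply congrArg
      funext j
      apply congrArg
      apply congrArg
      apply Fin.ext
      simp
    · rw [dif_neg h, dif_neg (by have := hr 0; omega : ¬ r 0 = k 0)]
  | (i + 1) =>
    rw [chainDet, chainDet]
    by_cases h : r2 (i + 1) + r2 i = k (i + 1)
    · have h2 : r (i + 1) + r i = k (i + 1) := by have := hr (i + 1); have := hr i; omega
      rw [dif_pos h, dif_pos h2]
      apply congrArg
      funext j
      have hstep := elim_cast_eq (hr (i + 1)) (hr i)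
        (fun y => d (i + 1) (b2 (i + 1) y)) (b2 i)
        (by have := hr (i + 1); have := hr i; omega) (Fin.cast h2.symm j)
      exact hstep.trans (congrArg _ (congrArg _ (Fin.ext (by simp))))
    · rw [dif_neg h, dif_neg (by intro hcon; apply h; have := hr (i + 1); have := hr i; omega)]

lemma torsion_recast (c : ∀ i, Basis (Fin (k i)) F (M i)) (N : ℕ) :
    torsion c d (fun i (x : Fin (r i)) => b2 i (Fin.cast (hr i).symm x)) N =
      torsion c d b2 N := by
  unfold torsion
  apply Finset.prod_congr rfl
  intro i _
  rw [chainDet_recast d b2 hr c i]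

end Recast

section Mult2

open Module

variable {M' M M'' : ℕ → Type}
    [∀ i, AddCommGroup (M' i)] [∀ i, Module F (M' i)] [∀ i, FiniteDimensional F (M' i)]
    [∀ i, AddCommGroup (M i)] [∀ i, Module F (M i)] [∀ i, FiniteDimensional F (M i)]
    [∀ i, AddCommGroup (M'' i)] [∀ i, Module F (M'' i)] [∀ i, FiniteDimensional F (M'' i)]
    {k' k k'' r' r r'' : ℕ → ℕ}
    (c' : ∀ i, Basis (Fin (k' i)) F (M' i)) (c : ∀ i, Basis (Fin (k i)) F (M i))
    (c'' : ∀ i, Basis (Fin (k'' i)) F (M'' i))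
    (d' : ∀ i, M' (i + 1) →ₗ[F] M' i) (d : ∀ i, M (i + 1) →ₗ[F] M i)
    (d'' : ∀ i, M'' (i + 1) →ₗ[F] M'' i)
    (f : ∀ i, M' i →ₗ[F] M i) (g : ∀ i, M i →ₗ[F] M'' i) (s : ∀ i, M'' i →ₗ[F] M i)
    (b' : ∀ i, Fin (r' i) → M' (i + 1)) (b'' : ∀ i, Fin (r'' i) → M'' (i + 1))

lemma midBasis_det_one
    (hinj : ∀ i, Function.Injective (f i))
    (hex : ∀ i, LinearMap.range (f i) = LinearMap.ker (g i))
    (hs : ∀ i, (g i).comp (s i) = LinearMap.id)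
    (hsum : ∀ i, k' i + k'' i = k i)
    (hcompat : ∀ i, ((c i).det fun j =>
        Sum.elim (fun x => f i (c' i x)) (fun y => s i (c'' i y))
          (finSumFinEquiv.symm (Fin.cast (hsum i).symm j))) = 1) (i : ℕ) :
    ((c i).toMatrix
      ⇑((midBasis (f i) (g i) (s i) (c' i) (c'' i) (hinj i) (hex i) (hs i)).reindex
        (finSumFinEquiv.trans (finCongr (hsum i))))).det = 1 := by
  rw [← Basis.det_apply]
  rw [← hcompat i]
  apply congrArg
  funext j
  rw [Basis.coe_reindex]
  simp only [Function.comp_apply, Equiv.symm_trans_apply]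
  have h1 : (finCongr (hsum i)).symm j = Fin.cast (hsum i).symm j := rfl
  rw [h1]
  rcases hp : finSumFinEquiv.symm (Fin.cast (hsum i).symm j) with x | y
  · rw [midBasis_apply_inl]; simp
  · rw [midBasis_apply_inr]; simp

lemma chainDet_bhat_zero
    (hf : ∀ i, (f i).comp (d' i) = (d i).comp (f (i + 1)))
    (hg : ∀ i, (g i).comp (d i) = (d'' i).comp (g (i + 1)))
    (hinj : ∀ i, Function.Injective (f i))
    (hex : ∀ i, LinearMap.range (f i) = LinearMap.ker (g i))
    (hs : ∀ i, (g i).comp (s i) = LinearMap.id)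
    (hsum : ∀ i, k' i + k'' i = k i)
    (hcompat : ∀ i, ((c i).det fun j =>
        Sum.elim (fun x => f i (c' i x)) (fun y => s i (c'' i y))
          (finSumFinEquiv.symm (Fin.cast (hsum i).symm j))) = 1)
    (hac' : IsAcyclic d') (hac'' : IsAcyclic d'')
    (hb' : IsTorsionChoice d' b') (hb'' : IsTorsionChoice d'' b'')
    (hk0' : r' 0 = k' 0) (hk0'' : r'' 0 = k'' 0) :
    ∃ ε : F, (ε = 1 ∨ ε = -1) ∧
      chainDet c d (bhat f s b' b'') 0 =
        ε * (chainDet c' d' b' 0 * chainDet c'' d'' b'' 0) := by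
  classical
  have h0 : r' 0 + r'' 0 = k 0 := by have := hsum 0; omega
  -- the reindexed zero bases
  set E0'r := (zeroBasis d' b' hac' hb').reindex (finCongr hk0') with hE0'r
  set E0''r := (zeroBasis d'' b'' hac'' hb'').reindex (finCongr hk0'') with hE0''r
  set mid := midBasis (f 0) (g 0) (s 0) (c' 0) (c'' 0) (hinj 0) (hex 0) (hs 0) with hmid
  set U := mid.reindex (finSumFinEquiv.trans (finCongr (hsum 0))) with hU
  -- the target family
  set Y : Fin (k' 0) ⊕ Fin (k'' 0) → M 0 := Sum.elim
    (fun t => f 0 (E0'r t)) (fun t => d 0 (s 1 (b'' 0 (Fin.cast hk0''.symm t)))) with hY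
  set G := mid.toMatrix Y with hG
  -- the column reindexing
  set ξ : Fin (k 0) ≃ (Fin (k' 0) ⊕ Fin (k'' 0)) :=
    (finCongr h0.symm).trans (finSumFinEquiv.symm.trans
      ((finCongr hk0').sumCongr (finCongr hk0''))) with hξ
  have hfam : ∀ j : Fin (k 0), d 0 (bhat f s b' b'' 0 (Fin.cast h0.symm j)) = Y (ξ j) := by
    intro j
    rw [d_bhat d' d f s b' b'' hf 0]
    rcases hp : finSumFinEquiv.symm (Fin.cast h0.symm j) with a | a
    · have hξj : ξ j = Sum.inl (Fin.cast hk0' a) := by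
        rw [hξ]; simp [hp]
      rw [hξj, Sum.elim_inl, hY, Sum.elim_inl]
      rw [hE0'r]
      apply congrArg
      rw [Basis.coe_reindex]
      simp only [Function.comp_apply]
      rw [show (finCongr hk0').symm (Fin.cast hk0' a) = a from by apply Fin.ext; simp]
      rw [zeroBasis_apply]
    · have hξj : ξ j = Sum.inr (Fin.cast hk0'' a) := by
        rw [hξ]; simp [hp]
      rw [hξj, Sum.elim_inr, hY, Sum.elim_inr]
      rw [show Fin.cast hk0''.symm (Fin.cast hk0'' a) = a from by apply Fin.ext; simp]
  -- block structure of G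
  obtain ⟨W, hW⟩ : ∃ W, G = Matrix.fromBlocks ((c' 0).toMatrix ⇑E0'r) W 0
      ((c'' 0).toMatrix ⇑E0''r) := by
    refine ⟨Matrix.of fun p t => mid.repr (Y (Sum.inr t)) (Sum.inl p), ?_⟩
    ext (p | p) (t | t)
    · rw [hG, Basis.toMatrix_apply, Matrix.fromBlocks_apply₁₁, hY, Sum.elim_inl]
      have : f 0 (E0'r t) = f 0 (E0'r t) + s 0 0 := by simp
      rw [this, hmid, midBasis_repr_inl, Basis.toMatrix_apply]
    · rw [hG, Basis.toMatrix_apply, Matrix.fromBlocks_apply₁₂, Matrix.of_apply]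
    · rw [hG, Basis.toMatrix_apply, Matrix.fromBlocks_apply₂₁, hY, Sum.elim_inl]
      have : f 0 (E0'r t) = f 0 (E0'r t) + s 0 0 := by simp
      rw [this, hmid, midBasis_repr_inr]
      simp
    · rw [hG, Basis.toMatrix_apply, Matrix.fromBlocks_apply₂₂, hY, Sum.elim_inr]
      obtain ⟨w', hw'⟩ := herr d d'' f g s hg hex hs 0 (b'' 0 (Fin.cast hk0''.symm t))
      rw [hw', hmid, midBasis_repr_inr, Basis.toMatrix_apply]
      have hE : E0''r t = d'' 0 (b'' 0 (Fin.cast hk0''.symm t)) := by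
        rw [hE0''r, Basis.reindex_apply, zeroBasis_apply]
        apply congrArg
        apply congrArg
        apply Fin.ext
        simp
      rw [hE]
  -- the submatrix identity
  have hsubm : U.toMatrix (fun j => d 0 (bhat f s b' b'' 0 (Fin.cast h0.symm j))) =
      G.submatrix ⇑(finSumFinEquiv.trans (finCongr (hsum 0))).symm ⇑ξ := by
    ext j j'
    rw [Basis.toMatrix_apply, hU, Basis.repr_reindex_apply, Matrix.submatrix_apply,
      hG, Basis.toMatrix_apply, hfam j']
  obtain ⟨ε, hε, hdet⟩ := det_submatrix_two_equiv G
    (finSumFinEquiv.trans (finCongr (hsum 0))).symm ξ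
  refine ⟨ε, hε, ?_⟩
  -- assemble
  rw [chainDet, dif_pos h0, Basis.det_apply]
  have hsplit : (c 0).toMatrix (fun j => d 0 (bhat f s b' b'' 0 (Fin.cast h0.symm j))) =
      (c 0).toMatrix ⇑U * U.toMatrix (fun j => d 0 (bhat f s b' b'' 0 (Fin.cast h0.symm j))) :=
    (Basis.toMatrix_mul_toMatrix _ _ _).symm
  rw [hsplit, Matrix.det_mul, hU, hmid,
    midBasis_det_one c' c c'' f g s hinj hex hs hsum hcompat 0, one_mul, hsubm, hdet, hW,
    Matrix.det_fromBlocks_zero₂₁]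
  rw [chainDet_zero_eq d' b' hac' hb' c' hk0', chainDet_zero_eq d'' b'' hac'' hb'' c'' hk0'',
    ← hE0'r, ← hE0''r]

lemma chainDet_bhat_succ
    (hcc' : IsChainComplex d') (hcc'' : IsChainComplex d'')
    (hf : ∀ i, (f i).comp (d' i) = (d i).comp (f (i + 1)))
    (hg : ∀ i, (g i).comp (d i) = (d'' i).comp (g (i + 1)))
    (hinj : ∀ i, Function.Injective (f i))
    (hex : ∀ i, LinearMap.range (f i) = LinearMap.ker (g i))
    (hs : ∀ i, (g i).comp (s i) = LinearMap.id)
    (hsum : ∀ i, k' i + k'' i = k i)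
    (hcompat : ∀ i, ((c i).det fun j =>
        Sum.elim (fun x => f i (c' i x)) (fun y => s i (c'' i y))
          (finSumFinEquiv.symm (Fin.cast (hsum i).symm j))) = 1)
    (hb' : IsTorsionChoice d' b') (hb'' : IsTorsionChoice d'' b'')
    (i : ℕ)
    (hk' : r' (i + 1) + r' i = k' (i + 1))
    (hk'' : r'' (i + 1) + r'' i = k'' (i + 1)) :
    ∃ ε : F, (ε = 1 ∨ ε = -1) ∧
      chainDet c d (bhat f s b' b'') (i + 1) =
        ε * (chainDet c' d' b' (i + 1) * chainDet c'' d'' b'' (i + 1)) := by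
  classical
  have h : (r' (i + 1) + r'' (i + 1)) + (r' i + r'' i) = k (i + 1) := by
    have := hsum (i + 1); omega
  have hk1' : finrank F (M' (i + 1)) = r' (i + 1) + r' i := by rw [finrank_M c']; omega
  have hk1'' : finrank F (M'' (i + 1)) = r'' (i + 1) + r'' i := by rw [finrank_M c'']; omega
  set eK' := finSumFinEquiv.trans (finCongr hk') with heK'
  set eK'' := finSumFinEquiv.trans (finCongr hk'') with heK''
  set E'r := (bigBasis d' b' hcc' hb' i hk1').reindex eK' with hE'r
  set E''r := (bigBasis d'' b'' hcc'' hb'' i hk1'').reindex eK'' with hE''r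
  set mid := midBasis (f (i + 1)) (g (i + 1)) (s (i + 1)) (c' (i + 1)) (c'' (i + 1))
    (hinj (i + 1)) (hex (i + 1)) (hs (i + 1)) with hmid
  set U := mid.reindex (finSumFinEquiv.trans (finCongr (hsum (i + 1)))) with hU
  set Y : Fin (k' (i + 1)) ⊕ Fin (k'' (i + 1)) → M (i + 1) := Sum.elim
    (fun t => f (i + 1) (E'r t))
    (fun t => Sum.elim (fun a => d (i + 1) (s (i + 2) (b'' (i + 1) a)))
      (fun a => s (i + 1) (b'' i a)) (eK''.symm t)) with hY
  set G := mid.toMatrix Y with hG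
  set ξ : Fin (k (i + 1)) ≃ (Fin (k' (i + 1)) ⊕ Fin (k'' (i + 1))) :=
    (finCongr h.symm).trans (finSumFinEquiv.symm.trans
      ((finSumFinEquiv.symm.sumCongr finSumFinEquiv.symm).trans
        ((Equiv.sumSumSumComm _ _ _ _).trans (eK'.sumCongr eK'')))) with hξ
  set fam : Fin (k (i + 1)) → M (i + 1) := fun j =>
    Sum.elim (fun x => d (i + 1) (bhat f s b' b'' (i + 1) x)) (bhat f s b' b'' i)
      (finSumFinEquiv.symm (Fin.cast h.symm j)) with hfamdef
  have hYl : ∀ u, Y (Sum.inl (eK' u)) =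
      f (i + 1) ((bigBasis d' b' hcc' hb' i hk1') u) := by
    intro u
    rw [hY, Sum.elim_inl, hE'r, Basis.reindex_apply, Equiv.symm_apply_apply]
  have hYr : ∀ u, Y (Sum.inr (eK'' u)) =
      Sum.elim (fun a => d (i + 1) (s (i + 2) (b'' (i + 1) a)))
        (fun a => s (i + 1) (b'' i a)) u := by
    intro u
    rw [hY, Sum.elim_inr, Equiv.symm_apply_apply]
  have hκ1 : ∀ a : Fin (r' (i + 1)), (eK'.sumCongr eK'')
      ((Equiv.sumSumSumComm (Fin (r' (i + 1))) (Fin (r'' (i + 1))) (Fin (r' i)) (Fin (r'' i)))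
        (Sum.inl (Sum.inl a))) = Sum.inl (eK' (Sum.inl a)) := fun a => rfl
  have hκ2 : ∀ a : Fin (r'' (i + 1)), (eK'.sumCongr eK'')
      ((Equiv.sumSumSumComm (Fin (r' (i + 1))) (Fin (r'' (i + 1))) (Fin (r' i)) (Fin (r'' i)))
        (Sum.inl (Sum.inr a))) = Sum.inr (eK'' (Sum.inl a)) := fun a => rfl
  have hκ3 : ∀ a : Fin (r' i), (eK'.sumCongr eK'')
      ((Equiv.sumSumSumComm (Fin (r' (i + 1))) (Fin (r'' (i + 1))) (Fin (r' i)) (Fin (r'' i)))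
        (Sum.inr (Sum.inl a))) = Sum.inl (eK' (Sum.inr a)) := fun a => rfl
  have hκ4 : ∀ a : Fin (r'' i), (eK'.sumCongr eK'')
      ((Equiv.sumSumSumComm (Fin (r' (i + 1))) (Fin (r'' (i + 1))) (Fin (r' i)) (Fin (r'' i)))
        (Sum.inr (Sum.inr a))) = Sum.inr (eK'' (Sum.inr a)) := fun a => rfl
  have hfam : ∀ j, fam j = Y (ξ j) := by
    intro j
    have hξj : ξ j = (eK'.sumCongr eK'') ((Equiv.sumSumSumComm _ _ _ _)
        ((finSumFinEquiv.symm.sumCongr finSumFinEquiv.symm)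
          (finSumFinEquiv.symm (Fin.cast h.symm j)))) := by
      rw [hξ]
      simp only [Equiv.trans_apply, finCongr_apply]
    rw [hξj]
    simp only [hfamdef]
    rcases hp : finSumFinEquiv.symm (Fin.cast h.symm j) with x | y
    · simp only [Sum.elim_inl]
      rw [show (finSumFinEquiv.symm.sumCongr finSumFinEquiv.symm) (Sum.inl x) =
        Sum.inl (finSumFinEquiv.symm x) from rfl]
      rw [d_bhat d' d f s b' b'' hf (i + 1)]
      rcases hq : finSumFinEquiv.symm x with a | a
      · simp only [Sum.elim_inl, hκ1, hYl]
        rw [bigBasis_apply]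
        rfl
      · simp only [Sum.elim_inr, hκ2, hYr, Sum.elim_inl]
    · simp only [Sum.elim_inr]
      rw [show (finSumFinEquiv.symm.sumCongr finSumFinEquiv.symm) (Sum.inr y) =
        Sum.inr (finSumFinEquiv.symm y) from rfl]
      rw [bhat]
      rcases hq : finSumFinEquiv.symm y with a | a
      · simp only [Sum.elim_inl, hκ3, hYl]
        rw [bigBasis_apply]
        rfl
      · simp only [Sum.elim_inr, hκ4, hYr]
  obtain ⟨W, hW⟩ : ∃ W, G = Matrix.fromBlocks ((c' (i + 1)).toMatrix ⇑E'r) W 0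
      ((c'' (i + 1)).toMatrix ⇑E''r) := by
    refine ⟨Matrix.of fun p t => mid.repr (Y (Sum.inr t)) (Sum.inl p), ?_⟩
    ext (p | p) (t | t)
    · rw [hG, Basis.toMatrix_apply, Matrix.fromBlocks_apply₁₁, hY, Sum.elim_inl]
      have hz : f (i + 1) (E'r t) = f (i + 1) (E'r t) + s (i + 1) 0 := by simp
      rw [hz, hmid, midBasis_repr_inl, Basis.toMatrix_apply]
    · rw [hG, Basis.toMatrix_apply, Matrix.fromBlocks_apply₁₂, Matrix.of_apply]
    · rw [hG, Basis.toMatrix_apply, Matrix.fromBlocks_apply₂₁, hY, Sum.elim_inl]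
      have hz : f (i + 1) (E'r t) = f (i + 1) (E'r t) + s (i + 1) 0 := by simp
      rw [hz, hmid, midBasis_repr_inr]
      simp
    · rw [hG, Basis.toMatrix_apply, Matrix.fromBlocks_apply₂₂, hY, Sum.elim_inr,
        Basis.toMatrix_apply]
      have hEt : E''r t = Sum.elim (fun a => d'' (i + 1) (b'' (i + 1) a)) (b'' i) (eK''.symm t) := by
        rw [hE''r, Basis.reindex_apply, bigBasis_apply]
      rw [hEt]
      rcases hq : eK''.symm t with a | a
      · rw [Sum.elim_inl, Sum.elim_inl]
        obtain ⟨w', hw'⟩ := herr d d'' f g s hg hex hs (i + 1) (b'' (i + 1) a)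
        rw [hw', hmid, midBasis_repr_inr]
      · rw [Sum.elim_inr, Sum.elim_inr]
        have hz : s (i + 1) (b'' i a) = f (i + 1) 0 + s (i + 1) (b'' i a) := by simp
        rw [hz, hmid, midBasis_repr_inr]
  have hsubm : U.toMatrix fam =
      G.submatrix ⇑(finSumFinEquiv.trans (finCongr (hsum (i + 1)))).symm ⇑ξ := by
    ext j j'
    rw [Basis.toMatrix_apply, hU, Basis.repr_reindex_apply, Matrix.submatrix_apply,
      hG, Basis.toMatrix_apply, hfam j']
  obtain ⟨ε, hε, hdet⟩ := det_submatrix_two_equiv G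
    (finSumFinEquiv.trans (finCongr (hsum (i + 1)))).symm ξ
  refine ⟨ε, hε, ?_⟩
  rw [chainDet, dif_pos h, Basis.det_apply]
  have hsplit : (c (i + 1)).toMatrix fam = (c (i + 1)).toMatrix ⇑U * U.toMatrix fam :=
    (Basis.toMatrix_mul_toMatrix _ _ _).symm
  rw [show ((c (i+1)).toMatrix fun j =>
        Sum.elim (fun x => d (i + 1) (bhat f s b' b'' (i + 1) x)) (bhat f s b' b'' i)
          (finSumFinEquiv.symm (Fin.cast h.symm j))) = (c (i + 1)).toMatrix fam from rfl]
  rw [hsplit, Matrix.det_mul, hU, hmid,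
    midBasis_det_one c' c c'' f g s hinj hex hs hsum hcompat (i + 1), one_mul, hsubm, hdet, hW,
    Matrix.det_fromBlocks_zero₂₁]
  rw [chainDet_succ_eq d' b' hcc' hb' c' i hk' hk1', chainDet_succ_eq d'' b'' hcc'' hb'' c'' i hk'' hk1'',
    ← heK', ← heK'', ← hE'r, ← hE''r]

end Mult2

/-- Multiplicativity of Reidemeister torsion (Lemma 6.2, acyclic case). Let
`0 → C' →^{f} C →^{g} C'' → 0` be a short exact sequence of based chain complexes of
finite-dimensional vector spaces with compatible bases (for each degree `i` there is a
section `s i` of `g i` such that the isomorphism `C'_i ⊕ C''_i → C_i` given by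
`f i ⊕ s i` has determinant `1` in the given bases).  If all three complexes are
acyclic, then `Tor(C) = Tor(C') ⬝ Tor(C'')` up to sign. -/
theorem stmt11 {M' M M'' : ℕ → Type}
    [∀ i, AddCommGroup (M' i)] [∀ i, Module F (M' i)] [∀ i, FiniteDimensional F (M' i)]
    [∀ i, AddCommGroup (M i)] [∀ i, Module F (M i)] [∀ i, FiniteDimensional F (M i)]
    [∀ i, AddCommGroup (M'' i)] [∀ i, Module F (M'' i)] [∀ i, FiniteDimensional F (M'' i)]
    {k' k k'' r' r r'' : ℕ → ℕ}
    (c' : ∀ i, Module.Basis (Fin (k' i)) F (M' i)) (c : ∀ i, Module.Basis (Fin (k i)) F (M i))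
    (c'' : ∀ i, Module.Basis (Fin (k'' i)) F (M'' i))
    (d' : ∀ i, M' (i + 1) →ₗ[F] M' i) (d : ∀ i, M (i + 1) →ₗ[F] M i)
    (d'' : ∀ i, M'' (i + 1) →ₗ[F] M'' i)
    (N : ℕ) (hdim : ∀ i, N < i → k i = 0)
    (hcc' : IsChainComplex d') (hcc : IsChainComplex d) (hcc'' : IsChainComplex d'')
    -- the chain maps of the short exact sequence
    (f : ∀ i, M' i →ₗ[F] M i) (g : ∀ i, M i →ₗ[F] M'' i)
    (hf : ∀ i, (f i).comp (d' i) = (d i).comp (f (i + 1)))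
    (hg : ∀ i, (g i).comp (d i) = (d'' i).comp (g (i + 1)))
    (hinj : ∀ i, Function.Injective (f i))
    (hex : ∀ i, LinearMap.range (f i) = LinearMap.ker (g i))
    (hsurj : ∀ i, Function.Surjective (g i))
    -- compatible bases, via sections of `g`
    (s : ∀ i, M'' i →ₗ[F] M i)
    (hs : ∀ i, (g i).comp (s i) = LinearMap.id)
    (hsum : ∀ i, k' i + k'' i = k i)
    (hcompat : ∀ i, ((c i).det fun j =>
        Sum.elim (fun x => f i (c' i x)) (fun y => s i (c'' i y))
          (finSumFinEquiv.symm (Fin.cast (hsum i).symm j))) = 1)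
    -- acyclicity and choices of the auxiliary vectors
    (hac' : IsAcyclic d') (hac : IsAcyclic d) (hac'' : IsAcyclic d'')
    (b' : ∀ i, Fin (r' i) → M' (i + 1)) (b : ∀ i, Fin (r i) → M (i + 1))
    (b'' : ∀ i, Fin (r'' i) → M'' (i + 1))
    (hb' : IsTorsionChoice d' b') (hb : IsTorsionChoice d b)
    (hb'' : IsTorsionChoice d'' b'') :
    torsion c d b N = torsion c' d' b' N * torsion c'' d'' b'' N ∨
      torsion c d b N = -(torsion c' d' b' N * torsion c'' d'' b'' N) := by
  classical
  have hr : ∀ i, r' i + r'' i = r i :=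
    rank_add d' d d'' b' b'' c' c c'' hac' hac hac'' b hb' hb hb'' N hdim hsum
  set bh := bhat f s b' b'' with hbhdef
  have hbh : IsTorsionChoice d bh :=
    bhat_torsionChoice d' d d'' f g s b' b'' hcc hf hg hinj hex hsurj hs hac'' hb' hb''
  have hb2 : IsTorsionChoice d (fun i (x : Fin (r i)) => bh i (Fin.cast (hr i).symm x)) :=
    torsionChoice_recast d bh hr hbh
  have hrN : r N = 0 := by
    have h1 := hk_succ d b c hac hb N
    have h2 := hdim (N + 1) (by omega)
    omega
  have step1 : torsion c d b N =
      torsion c d (fun i (x : Fin (r i)) => bh i (Fin.cast (hr i).symm x)) N :=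
    torsion_eq_of_choices d (fun i (x : Fin (r i)) => bh i (Fin.cast (hr i).symm x)) b
      hcc hac hb2 hb c N hrN
  have step2 : torsion c d (fun i (x : Fin (r i)) => bh i (Fin.cast (hr i).symm x)) N =
      torsion c d bh N := torsion_recast d bh hr c N
  -- now the factorwise identity
  have hcd : ∀ i, ∃ ε : F, (ε = 1 ∨ ε = -1) ∧
      chainDet c d bh i = ε * (chainDet c' d' b' i * chainDet c'' d'' b'' i) := by
    intro i
    match i with
    | 0 =>
      exact chainDet_bhat_zero c' c c'' d' d d'' f g s b' b'' hf hg hinj hex hs hsum hcompat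
        hac' hac'' hb' hb'' (hk_zero d' b' c' hac' hb').symm (hk_zero d'' b'' c'' hac'' hb'').symm
    | (i + 1) =>
      exact chainDet_bhat_succ c' c c'' d' d d'' f g s b' b'' hcc' hcc'' hf hg hinj hex hs hsum
        hcompat hb' hb'' i (hk_succ d' b' c' hac' hb' i).symm (hk_succ d'' b'' c'' hac'' hb'' i).symm
  choose ε hε1 hε2 using hcd
  have hfactor : torsion c d bh N =
      (∏ i ∈ Finset.range (N + 1), ε i ^ ((-1 : ℤ) ^ (i + 1))) *
        (torsion c' d' b' N * torsion c'' d'' b'' N) := by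
    rw [torsion, torsion, torsion]
    rw [← Finset.prod_mul_distrib, ← Finset.prod_mul_distrib]
    apply Finset.prod_congr rfl
    intro i _
    rw [hε2 i, mul_zpow, mul_zpow]
  have hsign : (∏ i ∈ Finset.range (N + 1), ε i ^ ((-1 : ℤ) ^ (i + 1))) = 1 ∨
      (∏ i ∈ Finset.range (N + 1), ε i ^ ((-1 : ℤ) ^ (i + 1))) = -1 := by
    apply Finset.prod_induction _ (fun x => x = 1 ∨ x = -1)
    · rintro a b (ha | ha) (hb | hb) <;> rw [ha, hb] <;> norm_num
    · left; rfl
    · intro i _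
      rcases hε1 i with h1 | h1
      · left; rw [h1, one_zpow]
      · right
        rw [h1]
        rcases Nat.even_or_odd (i + 1) with he | he
        · rw [Even.neg_one_pow he, zpow_one]
        · rw [Odd.neg_one_pow he, zpow_neg, zpow_one]
          norm_num
  rw [step1, step2, hfactor]
  rcases hsign with hE | hE
  · left; rw [hE, one_mul]
  · right; rw [hE, neg_one_mul]
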